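/- Let n ∈ ℕ and let x, y ∈ ℝ^{n+1} both lie on the Lorentz hyperboloid L^n_{−1} of curvature K = −1 (i.e. ⟨x,x⟩_L = ⟨y,y⟩_L = −1 and x₀, y₀ > 0), with x ≠ y. Let u := log_x(y) = arcosh(−⟨x,y⟩_L)·(y + ⟨x,y⟩_L x)/√(⟨y + ⟨x,y⟩_L x, y + ⟨x,y⟩_L x⟩_L) and exp_x(v) := cosh(‖v‖_L)·x + sinh(‖v‖_L)·v/‖v‖_L for spacelike v, where ‖v‖_L = √(⟨v,v⟩_L). Then exp_x(log_x(y)) = y. -/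

import Mathlib

/-- The Lorentzian scalar product on `ℝ^{n+1}`:
`⟨x,y⟩_L = -x₀y₀ + ∑_{i=1}^n x_i y_i`. -/
def lprod {n : ℕ} (x y : Fin (n + 1) → ℝ) : ℝ :=
  -(x 0 * y 0) + ∑ i : Fin n, x i.succ * y i.succ

/-- The inverse hyperbolic cosine: `arcosh t = log (t + √(t² − 1))`,
the inverse of `cosh` on `[1, ∞)`. -/
noncomputable def arcosh (t : ℝ) : ℝ :=
  Real.log (t + Real.sqrt (t ^ 2 - 1))

lemma lprod_smul_self {n : ℕ} (t : ℝ) (v : Fin (n + 1) → ℝ) :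
    lprod (t • v) (t • v) = t ^ 2 * lprod v v := by
  simp only [lprod, Pi.smul_apply, smul_eq_mul]
  have h : ∀ i : Fin n, (t * v i.succ) * (t * v i.succ) = t ^ 2 * (v i.succ * v i.succ) :=
    fun i => by ring
  rw [Finset.sum_congr rfl fun i _ => h i, ← Finset.mul_sum]
  ring

/-- On the hyperboloid of curvature `−1`, the exponential map inverts the
logarithmic map: for distinct `x, y ∈ L^n_{−1}`, with
`u = log_x(y) = arcosh(−⟨x,y⟩_L)·(y + ⟨x,y⟩_L·x)/√(⟨y + ⟨x,y⟩_L·x, y + ⟨x,y⟩_L·x⟩_L)`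
and `exp_x(v) = cosh(‖v‖_L)·x + sinh(‖v‖_L)·v/‖v‖_L` (`‖v‖_L = √(⟨v,v⟩_L)`),
one has `exp_x(log_x(y)) = y`. -/
theorem exp_log_inverse_on_hyperboloid (n : ℕ)
    (x y : Fin (n + 1) → ℝ)
    (hx : lprod x x = -1) (hx0 : x 0 > 0)
    (hy : lprod y y = -1) (hy0 : y 0 > 0) (hxy : x ≠ y)
    (w : Fin (n + 1) → ℝ) (hw : w = y + (lprod x y) • x)
    (u : Fin (n + 1) → ℝ)
    (hu : u = (arcosh (-(lprod x y)) / Real.sqrt (lprod w w)) • w) :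
    (fun i => Real.cosh (Real.sqrt (lprod u u)) * x i +
      Real.sinh (Real.sqrt (lprod u u)) * u i / Real.sqrt (lprod u u)) = y := by
  set α := lprod x y with hαdef
  -- Step 1 : α < -1
  have hα : α < -1 := by
    set A := ∑ i : Fin n, x i.succ * x i.succ with hA
    set B := ∑ i : Fin n, y i.succ * y i.succ with hB
    set S := ∑ i : Fin n, x i.succ * y i.succ with hS
    have e1 : -(x 0 * x 0) + A = -1 := hx
    have e2 : -(y 0 * y 0) + B = -1 := hy
    have e3 : α = -(x 0 * y 0) + S := hαdef
    have hCS : S ^ 2 ≤ A * B := by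
      have h := Finset.sum_mul_sq_le_sq_mul_sq Finset.univ
        (fun i : Fin n => x i.succ) (fun i : Fin n => y i.succ)
      have hA2 : (∑ i : Fin n, (x i.succ) ^ 2) = A := by
        rw [hA]; exact Finset.sum_congr rfl fun i _ => sq (x i.succ)
      have hB2 : (∑ i : Fin n, (y i.succ) ^ 2) = B := by
        rw [hB]; exact Finset.sum_congr rfl fun i _ => sq (y i.succ)
      rw [hA2, hB2] at h
      exact h
    have hne : ∃ i : Fin n, x i.succ ≠ y i.succ := by
      by_contra h
      push_neg at h
      have hAB : A = B := Finset.sum_congr rfl fun i _ => by rw [h i]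
      have h00 : x 0 = y 0 := by nlinarith
      exact hxy (funext fun i => Fin.cases h00 h i)
    obtain ⟨j, hj⟩ := hne
    have hpos : 0 < ∑ i : Fin n, (x i.succ - y i.succ) ^ 2 := by
      refine Finset.sum_pos' (fun i _ => sq_nonneg _) ⟨j, Finset.mem_univ j, ?_⟩
      have : x j.succ - y j.succ ≠ 0 := sub_ne_zero.mpr hj
      positivity
    have hexp : (∑ i : Fin n, (x i.succ - y i.succ) ^ 2) = A + B - 2 * S := by
      have h : ∀ i : Fin n, (x i.succ - y i.succ) ^ 2 =
          x i.succ * x i.succ + y i.succ * y i.succ - 2 * (x i.succ * y i.succ) :=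
        fun i => by ring
      rw [Finset.sum_congr rfl fun i _ => h i, hA, hB, hS]
      rw [Finset.sum_sub_distrib, Finset.sum_add_distrib, ← Finset.mul_sum]
    rw [hexp] at hpos
    have hxyprod : 0 < x 0 * y 0 := mul_pos hx0 hy0
    nlinarith [sq_nonneg (x 0 * y 0 - (1 + S)), sq_nonneg (x 0 * y 0 + 1 + S)]
  set c := -α with hc
  have hc1 : 1 < c := by linarith
  have hc2 : (0:ℝ) < c ^ 2 - 1 := by nlinarith
  set s := Real.sqrt (c ^ 2 - 1) with hsdef
  have hspos : 0 < s := Real.sqrt_pos.mpr hc2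
  have hs2 : s ^ 2 = c ^ 2 - 1 := Real.sq_sqrt hc2.le
  -- lprod w w = c^2 - 1
  have hww : lprod w w = c ^ 2 - 1 := by
    rw [hw]
    simp only [lprod, Pi.add_apply, Pi.smul_apply, smul_eq_mul]
    have h1 : ∀ i : Fin n, (y i.succ + α * x i.succ) * (y i.succ + α * x i.succ)
        = y i.succ * y i.succ + 2 * α * (x i.succ * y i.succ)
          + α ^ 2 * (x i.succ * x i.succ) := fun i => by ring
    rw [Finset.sum_congr rfl fun i _ => h1 i]
    rw [Finset.sum_add_distrib, Finset.sum_add_distrib, ← Finset.mul_sum, ← Finset.mul_sum]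
    have e1 : -(x 0 * x 0) + ∑ i : Fin n, x i.succ * x i.succ = -1 := hx
    have e2 : -(y 0 * y 0) + ∑ i : Fin n, y i.succ * y i.succ = -1 := hy
    have e3 : α = -(x 0 * y 0) + ∑ i : Fin n, x i.succ * y i.succ := hαdef
    have hc' : c = -α := hc
    nlinarith [e1, e2, e3]
  have hsw : Real.sqrt (lprod w w) = s := by rw [hww]
  -- arcosh c properties
  set L := arcosh c with hL
  have hcs_pos : (0:ℝ) < c + s := by linarith
  have hexpL : Real.exp L = c + s := by
    rw [hL, arcosh, ← hsdef, Real.exp_log hcs_pos]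
  have hmul : (c + s) * (c - s) = 1 := by nlinarith
  have hexpnegL : Real.exp (-L) = c - s := by
    rw [Real.exp_neg, hexpL]
    field_simp
    nlinarith
  have hLpos : 0 < L := by
    rw [hL, arcosh, ← hsdef]
    exact Real.log_pos (by linarith)
  have hcosh : Real.cosh L = c := by
    rw [Real.cosh_eq, hexpL, hexpnegL]; ring
  have hsinh : Real.sinh L = s := by
    rw [Real.sinh_eq, hexpL, hexpnegL]; ring
  -- lprod u u = L^2
  have huu : lprod u u = L ^ 2 := by
    rw [hu, lprod_smul_self, hsw, hww, div_pow, hs2]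
    field_simp
  have hsqrtuu : Real.sqrt (lprod u u) = L := by
    rw [huu, Real.sqrt_sq hLpos.le]
  -- finish
  funext i
  simp only [hsqrtuu, hcosh, hsinh]
  have hui : u i = (L / s) * (y i + α * x i) := by
    rw [hu, Pi.smul_apply, hsw, hw]
    simp only [Pi.add_apply, Pi.smul_apply, smul_eq_mul]
  rw [hui, hc]
  field_simp
  ring
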